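/- Let (X,d) be a metric space, γ a Borel measure on X with 0 < γ(B) < ∞ for every ball B, and m : X → (0,∞) an admissibility function. Let 1 < p,q < ∞ with conjugate exponents p', q' (1/p + 1/p' = 1, 1/q + 1/q' = 1). Then for all measurable f, g : D → ℂ one has ∬_D |f(y,t)|·|g(y,t)| dγ(y) dt/t ≤ ‖A_q^1 f‖_{L^p(γ)} · ‖A_{q'}^1 g‖_{L^{p'}(γ)}. -/

import Mathlib

open MeasureTheory Metric ENNReal

noncomputable def tMeasure : Measure ℝ :=
  (volume : Measure ℝ).withDensity fun t => ENNReal.ofReal (1 / t)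

noncomputable def planeMeasure {X : Type*} [MeasurableSpace X] (γ : Measure X) :
    Measure (X × ℝ) := γ.prod tMeasure

def admRegion {X : Type*} (m : X → ℝ) : Set (X × ℝ) := {p | 0 < p.2 ∧ p.2 < m p.1}

def tCone {X : Type*} [PseudoMetricSpace X] (m : X → ℝ) (α : ℝ) (x : X) : Set (X × ℝ) :=
  {p | 0 < p.2 ∧ p.2 < m p.1 ∧ dist x p.1 < α * p.2}

def tentSet {X : Type*} [PseudoMetricSpace X] (m : X → ℝ) (O : Set X) : Set (X × ℝ) :=
  {p | 0 < p.2 ∧ p.2 < m p.1 ∧ Metric.ball p.1 p.2 ⊆ O}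

noncomputable def Afun {X : Type*} [PseudoMetricSpace X] [MeasurableSpace X]
    (γ : Measure X) (m : X → ℝ) (q α : ℝ) (f : X × ℝ → ℂ) (x : X) : ℝ≥0∞ :=
  (∫⁻ p in tCone m α x, (‖f p‖₊ : ℝ≥0∞) ^ q / γ (Metric.ball p.1 p.2) ∂(planeMeasure γ)) ^ (1 / q)

noncomputable def tNorm {X : Type*} [PseudoMetricSpace X] [MeasurableSpace X]
    (γ : Measure X) (m : X → ℝ) (p q α : ℝ) (f : X × ℝ → ℂ) : ℝ≥0∞ :=
  (∫⁻ x, Afun γ m q α f x ^ p ∂γ) ^ (1 / p)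

lemma sepAux {X : Type*} [MetricSpace X] [MeasurableSpace X] [BorelSpace X]
    (γ : Measure X) [SFinite γ]
    (hγ : ∀ (c : X) (r : ℝ), 0 < r → 0 < γ (ball c r)) :
    TopologicalSpace.SeparableSpace X := by
  have key : ∀ ε : ℝ, 0 < ε → ∃ S : Set X, S.Countable ∧ ∀ x : X, ∃ s ∈ S, dist x s < ε := by
    intro ε hε
    have hzorn : ∀ c ⊆ {S : Set X | S.Pairwise fun a b => ε ≤ dist a b},
        IsChain (· ⊆ ·) c → ∃ ub ∈ {S : Set X | S.Pairwise fun a b => ε ≤ dist a b},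
          ∀ s ∈ c, s ⊆ ub := by
      intro c hc hchain
      refine ⟨⋃₀ c, ?_, fun s hs => Set.subset_sUnion_of_mem hs⟩
      intro a ha b hb hab
      obtain ⟨s, hsc, has⟩ := ha
      obtain ⟨t, htc, hbt⟩ := hb
      rcases hchain.total hsc htc with h | h
      · exact hc htc (h has) hbt hab
      · exact hc hsc has (h hbt) hab
    obtain ⟨M, hMmax⟩ := zorn_subset {S : Set X | S.Pairwise fun a b => ε ≤ dist a b} hzorn
    refine ⟨M, ?_, ?_⟩
    · have hdisj : Pairwise (Function.onFun Disjoint fun s : M => ball (s : X) (ε / 2)) := by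
        intro s t hst
        have hd : ε ≤ dist (s : X) (t : X) := hMmax.1 s.2 t.2 (Subtype.coe_injective.ne hst)
        exact ball_disjoint_ball (by linarith)
      have hcnt := MeasureTheory.Measure.countable_meas_pos_of_disjoint_iUnion
        (μ := γ) (fun s : M => measurableSet_ball) hdisj
      have huniv : {i : M | 0 < γ (ball (i : X) (ε / 2))} = Set.univ := by
        ext i; simp [hγ _ _ (by linarith : (0:ℝ) < ε / 2)]
      rw [huniv] at hcnt
      have : Countable M := Set.countable_univ_iff.mp hcnt
      exact Set.countable_coe_iff.mp this
    · intro x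
      by_contra hcon
      push_neg at hcon
      have hxM : x ∉ M := fun hx => absurd (hcon x hx) (by simp [hε])
      have hins : insert x M ∈ {S : Set X | S.Pairwise fun a b => ε ≤ dist a b} :=
        hMmax.1.insert fun y hy _ => ⟨hcon y hy, by rw [dist_comm]; exact hcon y hy⟩
      have := hMmax.2 hins (Set.subset_insert x M)
      exact hxM (this (Set.mem_insert x M))
  choose S hScnt hSnet using fun n : ℕ => key (1 / (n + 1)) (by positivity)
  refine ⟨⟨⋃ n, S n, Set.countable_iUnion hScnt, ?_⟩⟩
  rw [dense_iff_inter_open]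
  intro U hU ⟨x, hx⟩
  obtain ⟨r, hr, hball⟩ := Metric.isOpen_iff.mp hU x hx
  obtain ⟨n, hn⟩ := exists_nat_one_div_lt hr
  obtain ⟨s, hs, hds⟩ := hSnet n x
  exact ⟨s, hball (by rw [mem_ball, dist_comm]; linarith), Set.mem_iUnion.2 ⟨n, hs⟩⟩

lemma splitENN {q q' : ℝ} (hq : 1 < q) (hq'pos : 0 < q') (hsum : 1 / q + 1 / q' = 1)
    (a b c : ℝ≥0∞) : a * b / c ≤ (a / c ^ (1 / q)) * (b / c ^ (1 / q')) := by
  have hq0 : (0:ℝ) < 1 / q := by positivity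
  have hq'0 : (0:ℝ) < 1 / q' := by positivity
  rcases eq_or_ne c 0 with rfl | hc0
  · rcases eq_or_ne a 0 with rfl | ha
    · simp
    rcases eq_or_ne b 0 with rfl | hb
    · simp
    rw [ENNReal.zero_rpow_of_pos hq0, ENNReal.zero_rpow_of_pos hq'0,
      ENNReal.div_zero ha, ENNReal.div_zero hb, ENNReal.top_mul (by simp)]
    exact le_top
  rcases eq_or_ne c ⊤ with rfl | hctop
  · simp [ENNReal.div_top]
  have hpow : c ^ (1 / q) * c ^ (1 / q') = c := by
    rw [← ENNReal.rpow_add _ _ hc0 hctop, hsum, ENNReal.rpow_one]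
  have h1 : c ^ (1 / q) ≠ 0 := by
    simp [ENNReal.rpow_eq_zero_iff, hc0, hctop, hq0, not_lt.2 hq0.le]
  have h1t : c ^ (1 / q) ≠ ⊤ := by
    simp [ENNReal.rpow_eq_top_iff, hc0, hctop, not_lt.2 hq0.le, hq0]
  apply le_of_eq
  have hcinv : c⁻¹ = (c ^ (1 / q))⁻¹ * (c ^ (1 / q'))⁻¹ := by
    rw [← ENNReal.mul_inv (Or.inl h1) (Or.inl h1t), hpow]
  simp only [div_eq_mul_inv]
  rw [hcinv]
  ring

theorem stmt6 {X : Type*} [MetricSpace X] [MeasurableSpace X] [BorelSpace X]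
    (γ : Measure X)
    (hγ : ∀ (c : X) (r : ℝ), 0 < r → 0 < γ (ball c r) ∧ γ (ball c r) < ⊤)
    (m : X → ℝ) (hm : ∀ x, 0 < m x)
    (p q p' q' : ℝ) (hp : 1 < p) (hq : 1 < q)
    (hp' : 1 / p + 1 / p' = 1) (hq' : 1 / q + 1 / q' = 1)
    (f g : X × ℝ → ℂ) (hf : Measurable f) (hg : Measurable g) :
    ∫⁻ pt in admRegion m, (‖f pt‖₊ : ℝ≥0∞) * (‖g pt‖₊ : ℝ≥0∞) ∂(planeMeasure γ) ≤
      tNorm γ m p q 1 f * tNorm γ m p' q' 1 g := by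
  -- conjugate exponent facts
  have hqpos : (0:ℝ) < q := lt_trans one_pos hq
  have hppos : (0:ℝ) < p := lt_trans one_pos hp
  have hq'pos : 0 < q' := by
    rcases lt_trichotomy q' 0 with h0 | h0 | h0
    · have h1 : 1 / q' < 0 := div_neg_of_pos_of_neg one_pos h0
      have h2 : 0 < 1 / q := by positivity
      have h3 : 1 / q < 1 := by
        rw [div_lt_one hqpos]; exact hq
      linarith
    · rw [h0] at hq'; simp at hq'
      have h2 : 1 / q < 1 := by rw [div_lt_one hqpos]; exact hq
      linarith
    · exact h0
  have hp'pos : 0 < p' := by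
    rcases lt_trichotomy p' 0 with h0 | h0 | h0
    · have h1 : 1 / p' < 0 := div_neg_of_pos_of_neg one_pos h0
      have h2 : 0 < 1 / p := by positivity
      have h3 : 1 / p < 1 := by
        rw [div_lt_one hppos]; exact hp
      linarith
    · rw [h0] at hp'; simp at hp'
      have h2 : 1 / p < 1 := by rw [div_lt_one hppos]; exact hp
      linarith
    · exact h0
  have hcq : Real.HolderConjugate q q' := Real.holderConjugate_iff.mpr ⟨hq, by simpa [one_div] using hq'⟩
  have hcp : Real.HolderConjugate p p' := Real.holderConjugate_iff.mpr ⟨hp, by simpa [one_div] using hp'⟩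
  have hq0 : q ≠ 0 := ne_of_gt hqpos
  have hq'0 : q' ≠ 0 := ne_of_gt hq'pos
  -- trivial case of empty space
  rcases isEmpty_or_nonempty X with hX | hX
  · haveI : IsEmpty (X × ℝ) := inferInstance
    rw [Measure.eq_zero_of_isEmpty ((planeMeasure γ).restrict (admRegion m)),
      lintegral_zero_measure]
    exact zero_le
  obtain ⟨x₀⟩ := hX
  haveI hsfγ : SigmaFinite γ :=
    ⟨⟨⟨fun n => ball x₀ (n + 1), fun _ => trivial,
      fun n => (hγ x₀ (n + 1) (by positivity)).2, iUnion_ball_nat_succ x₀⟩⟩⟩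
  haveI : TopologicalSpace.SeparableSpace X := sepAux γ fun c r hr => (hγ c r hr).1
  haveI : SecondCountableTopology X := UniformSpace.secondCountable_of_separable X
  haveI htm : SFinite tMeasure :=
    inferInstanceAs (SFinite ((volume : Measure ℝ).withDensity fun t => ENNReal.ofReal (1 / t)))
  haveI hμsf : SFinite (planeMeasure γ) := by
    show SFinite (γ.prod tMeasure); infer_instance
  set μ := planeMeasure γ with hμdef
  -- basic functions
  set F : X × ℝ → ℝ≥0∞ := fun pt => (‖f pt‖₊ : ℝ≥0∞) with hFdef
  set G : X × ℝ → ℝ≥0∞ := fun pt => (‖g pt‖₊ : ℝ≥0∞) with hGdef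
  set B : X × ℝ → ℝ≥0∞ := fun pt => γ (ball pt.1 pt.2) with hBdef
  have hFm : Measurable F := hf.nnnorm.coe_nnreal_ennreal
  have hGm : Measurable G := hg.nnnorm.coe_nnreal_ennreal
  have hBm : Measurable B := by
    have hs : MeasurableSet {z : (X × ℝ) × X | dist z.2 z.1.1 < z.1.2} :=
      measurableSet_lt (measurable_snd.dist (measurable_fst.comp measurable_fst))
        (measurable_snd.comp measurable_fst)
    exact measurable_measure_prodMk_left (ν := γ) hs
  -- the measurable enlargement of the admissible region
  set D : Set (X × ℝ) := admRegion m with hDdef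
  set E : Set (X × ℝ) := {pt | 0 < pt.2} ∩ ({pt | 0 < B pt} ∩ {pt | B pt < ⊤}) with hEdef
  have hEm : MeasurableSet E :=
    (measurableSet_lt measurable_const measurable_snd).inter
      ((measurableSet_lt measurable_const hBm).inter (measurableSet_lt hBm measurable_const))
  have hDE : D ⊆ E := fun pt hpt =>
    ⟨hpt.1, (hγ pt.1 pt.2 hpt.1).1, (hγ pt.1 pt.2 hpt.1).2⟩
  set D₀ : Set (X × ℝ) := toMeasurable μ D ∩ E with hD₀def
  have hD₀m : MeasurableSet D₀ := (measurableSet_toMeasurable μ D).inter hEm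
  have hres : μ.restrict D₀ = μ.restrict D := by
    rw [hD₀def, Set.inter_comm, ← Measure.restrict_restrict hEm,
      Measure.restrict_toMeasurable_of_sFinite,
      Measure.restrict_restrict hEm, Set.inter_eq_self_of_subset_right hDE]
  -- cone identities
  have hCm : ∀ x : X, MeasurableSet {pt : X × ℝ | dist x pt.1 < 1 * pt.2} := fun x =>
    measurableSet_lt ((measurable_const (a := x)).dist measurable_fst)
      (measurable_const.mul measurable_snd)
  have hcone : ∀ x : X, μ.restrict (tCone m 1 x)
      = μ.restrict ({pt : X × ℝ | dist x pt.1 < 1 * pt.2} ∩ D₀) := by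
    intro x
    have hset : tCone m 1 x = {pt : X × ℝ | dist x pt.1 < 1 * pt.2} ∩ D := by
      ext pt
      simp only [tCone, hDdef, admRegion, Set.mem_setOf_eq, Set.mem_inter_iff]
      tauto
    rw [hset, ← Measure.restrict_restrict (hCm x), ← hres, Measure.restrict_restrict (hCm x)]
  -- the kernel
  set W : X × ℝ → ℝ≥0∞ := fun pt => F pt * G pt / B pt with hWdef
  have hWm : Measurable W := (hFm.mul hGm).div hBm
  set K : X → (X × ℝ) → ℝ≥0∞ :=
    fun x pt => ({pt : X × ℝ | dist x pt.1 < 1 * pt.2} ∩ D₀).indicator W pt with hKdef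
  -- step 1: the left-hand side as a double integral
  have key1 : ∀ pt : X × ℝ, D₀.indicator (fun pt => F pt * G pt) pt = ∫⁻ x, K x pt ∂γ := by
    intro pt
    by_cases hpt : pt ∈ D₀
    · rw [Set.indicator_of_mem hpt]
      have hKx : ∀ x : X, K x pt = (ball pt.1 pt.2).indicator (fun _ => W pt) x := by
        intro x
        by_cases hx : dist x pt.1 < pt.2
        · rw [Set.indicator_of_mem (mem_ball.mpr hx)]
          exact Set.indicator_of_mem
            (Set.mem_inter (by simpa [one_mul] using hx) hpt) W
        · rw [Set.indicator_of_notMem (fun h => hx (mem_ball.mp h))]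
          exact Set.indicator_of_notMem
            (fun hmem => hx (by simpa [one_mul] using hmem.1)) W
      calc F pt * G pt = W pt * B pt := by
            rw [hWdef]
            exact (ENNReal.div_mul_cancel (ne_of_gt hpt.2.2.1) (ne_of_lt hpt.2.2.2)).symm
        _ = ∫⁻ x, (ball pt.1 pt.2).indicator (fun _ => W pt) x ∂γ := by
            rw [lintegral_indicator_const measurableSet_ball]
        _ = ∫⁻ x, K x pt ∂γ := lintegral_congr fun x => (hKx x).symm
    · rw [Set.indicator_of_notMem hpt]
      have hz : ∀ x : X, K x pt = 0 := fun x =>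
        Set.indicator_of_notMem (fun hc => hpt hc.2) _
      simp [hz]
  -- joint measurability of the kernel
  have hKunc : Measurable (Function.uncurry fun pt (x : X) => K x pt) := by
    have hTm : MeasurableSet {z : (X × ℝ) × X | dist z.2 z.1.1 < 1 * z.1.2 ∧ z.1 ∈ D₀} := by
      refine (measurableSet_lt (measurable_snd.dist (measurable_fst.comp measurable_fst))
        (measurable_const.mul (measurable_snd.comp measurable_fst))).inter ?_
      exact hD₀m.preimage measurable_fst
    have heq : (Function.uncurry fun pt (x : X) => K x pt)
        = fun z : (X × ℝ) × X =>
          ({z : (X × ℝ) × X | dist z.2 z.1.1 < 1 * z.1.2 ∧ z.1 ∈ D₀}).indicator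
            (fun z => W z.1) z := by
      ext z
      by_cases h : dist z.2 z.1.1 < 1 * z.1.2 ∧ z.1 ∈ D₀
      · rw [Set.indicator_of_mem (by exact h)]
        exact Set.indicator_of_mem (Set.mem_inter (by exact h.1) h.2) W
      · rw [Set.indicator_of_notMem (by exact h)]
        exact Set.indicator_of_notMem (fun hc => h ⟨hc.1, hc.2⟩) W
    rw [heq]
    exact (hWm.comp measurable_fst).indicator hTm
  -- step 2 : Fubini--Tonelli
  have swap : ∫⁻ pt, ∫⁻ x, K x pt ∂γ ∂μ = ∫⁻ x, ∫⁻ pt, K x pt ∂μ ∂γ :=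
    lintegral_lintegral_swap hKunc.aemeasurable
  -- measurability of the area functionals
  have hAfm : Measurable fun x => Afun γ m q 1 f x := by
    have hTm : MeasurableSet {z : X × (X × ℝ) | dist z.1 z.2.1 < 1 * z.2.2 ∧ z.2 ∈ D₀} := by
      refine (measurableSet_lt (measurable_fst.dist (measurable_fst.comp measurable_snd))
        (measurable_const.mul (measurable_snd.comp measurable_snd))).inter ?_
      exact hD₀m.preimage measurable_snd
    have hintm : Measurable fun x => ∫⁻ pt,
        ({z : X × (X × ℝ) | dist z.1 z.2.1 < 1 * z.2.2 ∧ z.2 ∈ D₀}).indicator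
          (fun z => F z.2 ^ q / B z.2) (x, pt) ∂μ := by
      apply Measurable.lintegral_prod_right'
      exact (((hFm.pow measurable_const).div hBm).comp measurable_snd).indicator hTm
    have heq : (fun x => Afun γ m q 1 f x) = fun x => (∫⁻ pt,
        ({z : X × (X × ℝ) | dist z.1 z.2.1 < 1 * z.2.2 ∧ z.2 ∈ D₀}).indicator
          (fun z => F z.2 ^ q / B z.2) (x, pt) ∂μ) ^ (1 / q) := by
      funext x
      rw [Afun]
      congr 1
      have h2 := lintegral_indicator (μ := μ) ((hCm x).inter hD₀m)
        (fun pt => F pt ^ q / B pt)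
      rw [← hcone x] at h2
      exact h2.symm
    rw [heq]
    exact hintm.pow measurable_const
  have hAgm : Measurable fun x => Afun γ m q' 1 g x := by
    have hTm : MeasurableSet {z : X × (X × ℝ) | dist z.1 z.2.1 < 1 * z.2.2 ∧ z.2 ∈ D₀} := by
      refine (measurableSet_lt (measurable_fst.dist (measurable_fst.comp measurable_snd))
        (measurable_const.mul (measurable_snd.comp measurable_snd))).inter ?_
      exact hD₀m.preimage measurable_snd
    have hintm : Measurable fun x => ∫⁻ pt,
        ({z : X × (X × ℝ) | dist z.1 z.2.1 < 1 * z.2.2 ∧ z.2 ∈ D₀}).indicator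
          (fun z => G z.2 ^ q' / B z.2) (x, pt) ∂μ := by
      apply Measurable.lintegral_prod_right'
      exact (((hGm.pow measurable_const).div hBm).comp measurable_snd).indicator hTm
    have heq : (fun x => Afun γ m q' 1 g x) = fun x => (∫⁻ pt,
        ({z : X × (X × ℝ) | dist z.1 z.2.1 < 1 * z.2.2 ∧ z.2 ∈ D₀}).indicator
          (fun z => G z.2 ^ q' / B z.2) (x, pt) ∂μ) ^ (1 / q') := by
      funext x
      rw [Afun]
      congr 1
      have h2 := lintegral_indicator (μ := μ) ((hCm x).inter hD₀m)
        (fun pt => G pt ^ q' / B pt)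
      rw [← hcone x] at h2
      exact h2.symm
    rw [heq]
    exact hintm.pow measurable_const
  -- step 3 : pointwise Hölder in q on each cone
  have step3 : ∀ x : X, ∫⁻ pt, K x pt ∂μ ≤ Afun γ m q 1 f x * Afun γ m q' 1 g x := by
    intro x
    have h1 : ∫⁻ pt, K x pt ∂μ = ∫⁻ pt in tCone m 1 x, W pt ∂μ := by
      have h2 := lintegral_indicator (μ := μ) ((hCm x).inter hD₀m) W
      rw [← hcone x] at h2
      exact h2
    rw [h1]
    set ν := μ.restrict (tCone m 1 x) with hνdef
    have hφψ : ∀ pt, W pt ≤ ((fun pt => F pt / B pt ^ (1 / q)) *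
        fun pt => G pt / B pt ^ (1 / q')) pt := fun pt =>
      splitENN hq hq'pos hq' (F pt) (G pt) (B pt)
    calc ∫⁻ pt, W pt ∂ν
        ≤ ∫⁻ pt, ((fun pt => F pt / B pt ^ (1 / q)) *
            fun pt => G pt / B pt ^ (1 / q')) pt ∂ν := lintegral_mono hφψ
      _ ≤ (∫⁻ pt, (F pt / B pt ^ (1 / q)) ^ q ∂ν) ^ (1 / q) *
          (∫⁻ pt, (G pt / B pt ^ (1 / q')) ^ q' ∂ν) ^ (1 / q') :=
          ENNReal.lintegral_mul_le_Lp_mul_Lq ν hcq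
            ((hFm.div (hBm.pow measurable_const)).aemeasurable)
            ((hGm.div (hBm.pow measurable_const)).aemeasurable)
      _ = Afun γ m q 1 f x * Afun γ m q' 1 g x := by
          have e1 : ∫⁻ pt, (F pt / B pt ^ (1 / q)) ^ q ∂ν
              = ∫⁻ pp in tCone m 1 x,
                  (‖f pp‖₊ : ℝ≥0∞) ^ q / γ (Metric.ball pp.1 pp.2) ∂(planeMeasure γ) :=
            lintegral_congr fun pt => by
              rw [ENNReal.div_rpow_of_nonneg _ _ (le_of_lt hqpos), ← ENNReal.rpow_mul,
                one_div_mul_cancel hq0, ENNReal.rpow_one]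
          have e2 : ∫⁻ pt, (G pt / B pt ^ (1 / q')) ^ q' ∂ν
              = ∫⁻ pp in tCone m 1 x,
                  (‖g pp‖₊ : ℝ≥0∞) ^ q' / γ (Metric.ball pp.1 pp.2) ∂(planeMeasure γ) :=
            lintegral_congr fun pt => by
              rw [ENNReal.div_rpow_of_nonneg _ _ (le_of_lt hq'pos), ← ENNReal.rpow_mul,
                one_div_mul_cancel hq'0, ENNReal.rpow_one]
          rw [Afun, Afun, e1, e2]
  -- assembling everything
  calc ∫⁻ pt in D, F pt * G pt ∂μ
      = ∫⁻ pt in D₀, F pt * G pt ∂μ := by rw [hres]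
    _ = ∫⁻ pt, D₀.indicator (fun pt => F pt * G pt) pt ∂μ :=
        (lintegral_indicator hD₀m _).symm
    _ = ∫⁻ pt, ∫⁻ x, K x pt ∂γ ∂μ := lintegral_congr key1
    _ = ∫⁻ x, ∫⁻ pt, K x pt ∂μ ∂γ := swap
    _ ≤ ∫⁻ x, Afun γ m q 1 f x * Afun γ m q' 1 g x ∂γ := lintegral_mono step3
    _ ≤ (∫⁻ x, Afun γ m q 1 f x ^ p ∂γ) ^ (1 / p) *
        (∫⁻ x, Afun γ m q' 1 g x ^ p' ∂γ) ^ (1 / p') :=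
        ENNReal.lintegral_mul_le_Lp_mul_Lq γ hcp hAfm.aemeasurable hAgm.aemeasurable
    _ = tNorm γ m p q 1 f * tNorm γ m p' q' 1 g := rfl
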